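/- Let (M^n, g, f) be a Miao-Tam critical metric with harmonic Weyl tensor and let q be a regular point; with orthonormal frame e₁ = -∇f/|∇f|, e₂,...,eₙ, one has R̊_{ij} + (R̊₁₁/(n-1))g_{ij} + ((n-2)/(n-1))W_{i1j1} = 0 for all 2 ≤ i,j ≤ n. -/

import Mathlib

/-- For a Miao-Tam critical metric with harmonic Weyl tensor, at a
regular point with adapted orthonormal frame `e₁ = -∇f/|∇f|, e₂, …, eₙ`, one has
`R̊_{ij} + (R̊₁₁/(n-1))g_{ij} + ((n-2)/(n-1))W_{i1j1} = 0` for all `i, j ≥ 2`.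
Stated at a point: `e1` is the distinguished frame index, `c = |∇f| > 0`,
`df = -c·e₁`, the vanishing of `fC = T + W(·,·,·,∇f)` is a hypothesis. -/
theorem tangential_traceless_ricci_weyl (n : ℕ) (hn : 3 ≤ n)
    (c R : ℝ) (hc : 0 < c)
    (e1 : Fin n)
    (Ric : Fin n → Fin n → ℝ) (df : Fin n → ℝ)
    (W : Fin n → Fin n → Fin n → Fin n → ℝ)
    (T : Fin n → Fin n → Fin n → ℝ)
    (hRicSym : ∀ i j, Ric i j = Ric j i)
    (hR : R = ∑ i, Ric i i)
    -- ∇f = -|∇f| e₁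
    (hdf : ∀ l, df l = if l = e1 then -c else 0)
    -- the auxiliary tensor T
    (hT : ∀ i j k, T i j k
      = ((n : ℝ) - 1) / ((n : ℝ) - 2) * (Ric i k * df j - Ric j k * df i)
        - R / ((n : ℝ) - 2)
          * ((if i = k then (1 : ℝ) else 0) * df j
            - (if j = k then (1 : ℝ) else 0) * df i)
        + 1 / ((n : ℝ) - 2)
          * ((if i = k then (1 : ℝ) else 0) * (∑ s, Ric j s * df s)
            - (if j = k then (1 : ℝ) else 0) * (∑ s, Ric i s * df s)))
    -- harmonic Weyl: 0 = f C = T + W(·,·,·,∇f)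
    (hC0 : ∀ i j k, T i j k + (∑ l, W i j k l * df l) = 0) :
    ∀ i j, i ≠ e1 → j ≠ e1 →
      (Ric i j - R / (n : ℝ) * (if i = j then 1 else 0))
        + ((Ric e1 e1 - R / (n : ℝ)) / ((n : ℝ) - 1)) * (if i = j then 1 else 0)
        + ((n : ℝ) - 2) / ((n : ℝ) - 1) * W i e1 j e1 = 0 := by
  intro i j hi hj
  have hc0 : c ≠ 0 := ne_of_gt hc
  have hn3 : (3:ℝ) ≤ (n:ℝ) := by exact_mod_cast hn
  have hn2 : ((n:ℝ) - 2) ≠ 0 := by linarith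
  have hn1 : ((n:ℝ) - 1) ≠ 0 := by linarith
  have hn0 : ((n:ℝ)) ≠ 0 := by linarith
  have hsum : ∀ g : Fin n → ℝ, (∑ l : Fin n, g l * df l) = g e1 * (-c) := by
    intro g
    simp only [hdf, mul_ite, mul_zero, mul_neg, Finset.sum_ite_eq', Finset.mem_univ, if_true]
  have h := hC0 i e1 j
  rw [hT, hsum, hsum, hsum, hdf i, hdf e1, if_neg hi, if_pos rfl, if_neg (Ne.symm hj)] at h
  have key : ((n:ℝ)-1) * Ric i j - (R - Ric e1 e1) * (if i = j then (1:ℝ) else 0)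
      + ((n:ℝ)-2) * W i e1 j e1 = 0 := by
    by_cases hij : i = j
    · simp only [if_pos hij, mul_one] at h ⊢
      field_simp at h
      have h3 : (c * ((n:ℝ)-2)^2) * (((n:ℝ)-1) * Ric i j - (R - Ric e1 e1)
          + ((n:ℝ)-2) * W i e1 j e1) = 0 := by linear_combination (-((n:ℝ)-2)^2) * h
      exact (mul_eq_zero.mp h3).resolve_left (mul_ne_zero hc0 (pow_ne_zero 2 hn2))
    · simp only [if_neg hij, mul_zero, sub_zero] at h ⊢
      field_simp at h
      have h3 : c * (((n:ℝ)-1) * Ric i j + ((n:ℝ)-2) * W i e1 j e1) = 0 := by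
        linear_combination -h
      exact (mul_eq_zero.mp h3).resolve_left hc0
  by_cases hij : i = j
  · simp only [if_pos hij] at key ⊢
    field_simp
    linear_combination (n:ℝ) * key
  · simp only [if_neg hij, mul_zero, sub_zero, zero_mul, add_zero, mul_one] at key ⊢
    field_simp
    linear_combination key
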